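/- If ξ* = (w_1,…,w_N) minimizes the convex, linearly differentiable criterion Φ over the set Ξ of bounded approximate designs, and i, j are two indices with ν_i < w_i < μ_i and ν_j < w_j < μ_j, then F_Φ(ξ*; i) = F_Φ(ξ*; j). -/

import Mathlib

open Filter Set

lemma aux_le
    (N : ℕ)
    (Δ : Set (Fin N → ℝ))
    (hΔ : Δ = {w : Fin N → ℝ | (∀ i, 0 ≤ w i) ∧ ∑ i, w i = 1})
    (Φ : (Fin N → ℝ) → ℝ)
    (F : (Fin N → ℝ) → (Fin N → ℝ) → ℝ)
    (hF : ∀ ξ ∈ Δ, ∀ η ∈ Δ,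
      Filter.Tendsto (fun α : ℝ => (Φ ((1 - α) • ξ + α • η) - Φ ξ) / α)
        (nhdsWithin 0 (Set.Ioi 0)) (nhds (F ξ η)))
    (hlin : ∀ ξ ∈ Δ, ∀ η ∈ Δ, F ξ η = ∑ i, η i * F ξ (Pi.single i 1))
    (ν μ : Fin N → ℝ)
    (hν0 : ∀ i, 0 ≤ ν i)
    (Ξ : Set (Fin N → ℝ))
    (hΞ : Ξ = {w : Fin N → ℝ | w ∈ Δ ∧ ∀ i, ν i ≤ w i ∧ w i ≤ μ i})
    (ξs : Fin N → ℝ) (hmem : ξs ∈ Ξ)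
    (hopt : ∀ ξ ∈ Ξ, Φ ξs ≤ Φ ξ)
    (i j : Fin N) (hij : i ≠ j)
    (hi : ν i < ξs i)
    (hj : ξs j < μ j) :
    F ξs (Pi.single i 1) ≤ F ξs (Pi.single j 1) := by
  subst hΔ hΞ
  obtain ⟨hmΔ, hbound⟩ := hmem
  obtain ⟨hpos, hsum⟩ := hmΔ
  set c : ℝ := ξs i with hc
  have hcpos : 0 < c := lt_of_le_of_lt (hν0 i) hi
  set η : Fin N → ℝ := fun k => ξs k + c * ((Pi.single j 1 : Fin N → ℝ) k - (Pi.single i 1 : Fin N → ℝ) k)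
    with hη
  have hsingle : ∀ k : Fin N, (Pi.single j 1 : Fin N → ℝ) k - (Pi.single i 1 : Fin N → ℝ) k
      = (if k = j then 1 else 0) - (if k = i then 1 else 0) := by
    intro k; simp [Pi.single_apply]
  have hηΔ : η ∈ {w : Fin N → ℝ | (∀ i, 0 ≤ w i) ∧ ∑ i, w i = 1} := by
    constructor
    · intro k
      rcases eq_or_ne k i with rfl | hki
      · simp [hη, hsingle, hij, Ne.symm hij, hc]
      rcases eq_or_ne k j with rfl | hkj
      · have := hpos k; simp [hη, hsingle, hki]; positivity
      · simpa [hη, hsingle, hki, hkj] using hpos k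
    · have h1 : ∑ k, η k = (∑ k, ξs k)
          + (c * ∑ k, (Pi.single j 1 : Fin N → ℝ) k - c * ∑ k, (Pi.single i 1 : Fin N → ℝ) k) := by
        rw [Finset.mul_sum, Finset.mul_sum, ← Finset.sum_sub_distrib, ← Finset.sum_add_distrib]
        exact Finset.sum_congr rfl fun k _ => by simp only [hη]; ring
      rw [h1, hsum, Finset.sum_pi_single', Finset.sum_pi_single']
      simp
  set ε : ℝ := min ((ξs i - ν i) / c) ((μ j - ξs j) / c) with hε
  have hεpos : 0 < ε := lt_min (div_pos (sub_pos.mpr hi) hcpos) (div_pos (sub_pos.mpr hj) hcpos)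
  have hmemα : ∀ α : ℝ, 0 < α → α < ε →
      ((1 - α) • ξs + α • η) ∈ {w : Fin N → ℝ | (w ∈ {w : Fin N → ℝ | (∀ i, 0 ≤ w i) ∧ ∑ i, w i = 1}) ∧ ∀ i, ν i ≤ w i ∧ w i ≤ μ i} := by
    intro α hα hαε
    have hform : ∀ k, ((1 - α) • ξs + α • η) k
        = ξs k + α * c * ((if k = j then 1 else 0) - (if k = i then 1 else 0)) := by
      intro k; simp [hη, hsingle, Pi.smul_apply, smul_eq_mul]; ring
    have hαci : α * c < ξs i - ν i := by
      have : α < (ξs i - ν i) / c := lt_of_lt_of_le hαε (min_le_left _ _)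
      calc α * c < ((ξs i - ν i) / c) * c := by nlinarith
        _ = ξs i - ν i := by field_simp
    have hαcj : α * c < μ j - ξs j := by
      have : α < (μ j - ξs j) / c := lt_of_lt_of_le hαε (min_le_right _ _)
      calc α * c < ((μ j - ξs j) / c) * c := by nlinarith
        _ = μ j - ξs j := by field_simp
    have hαc : 0 < α * c := by positivity
    have hbk : ∀ k, ν k ≤ ((1 - α) • ξs + α • η) k ∧ ((1 - α) • ξs + α • η) k ≤ μ k := by
      intro k
      rw [hform k]
      rcases eq_or_ne k i with rfl | hki
      · rw [if_neg hij, if_pos rfl]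
        exact ⟨by linarith, by have := (hbound k).2; linarith⟩
      rcases eq_or_ne k j with rfl | hkj
      · rw [if_pos rfl, if_neg hki]
        exact ⟨by have := (hbound k).1; linarith, by linarith⟩
      · rw [if_neg hkj, if_neg hki]
        simpa using hbound k
    refine ⟨⟨fun k => le_trans (hν0 k) (hbk k).1, ?_⟩, hbk⟩
    have : ∑ k, ((1 - α) • ξs + α • η) k
        = (∑ k, ξs k) + α * c * ((∑ k, (if k = j then (1:ℝ) else 0)) - ∑ k, (if k = i then (1:ℝ) else 0)) := by
      simp only [hform]
      simp [Finset.sum_add_distrib, Finset.mul_sum, Finset.sum_sub_distrib, mul_sub]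
    rw [this, hsum]; simp
  -- nonnegativity of F ξs η
  have hΔmem : ξs ∈ {w : Fin N → ℝ | (∀ i, 0 ≤ w i) ∧ ∑ i, w i = 1} := ⟨hpos, hsum⟩
  have hev : ∀ᶠ α in nhdsWithin (0:ℝ) (Set.Ioi 0),
      0 ≤ (Φ ((1 - α) • ξs + α • η) - Φ ξs) / α := by
    filter_upwards [Ioo_mem_nhdsGT_of_mem (by constructor <;> simp [hεpos.le, hεpos] : (0:ℝ) ∈ Set.Ico 0 ε)] with α hα
    have h1 := hopt _ (hmemα α hα.1 hα.2)
    have h2 : 0 ≤ Φ ((1 - α) • ξs + α • η) - Φ ξs := by linarith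
    exact div_nonneg h2 hα.1.le
  have hFη : 0 ≤ F ξs η := ge_of_tendsto (hF ξs hΔmem η hηΔ) hev
  -- F ξs ξs = 0
  have hself : F ξs ξs = 0 := by
    have heq : (fun α : ℝ => (Φ ((1 - α) • ξs + α • ξs) - Φ ξs) / α) = fun _ => (0:ℝ) := by
      funext α
      have : (1 - α) • ξs + α • ξs = ξs := by
        funext k; simp [Pi.smul_apply, smul_eq_mul]; ring
      rw [this]; simp
    have h2 := hF ξs hΔmem ξs hΔmem
    rw [heq] at h2
    exact tendsto_nhds_unique h2 tendsto_const_nhds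
  have hsum0 : ∑ k, ξs k * F ξs (Pi.single k 1) = 0 := by
    rw [← hlin ξs hΔmem ξs hΔmem, hself]
  have hexp : F ξs η = c * (F ξs (Pi.single j 1) - F ξs (Pi.single i 1)) := by
    rw [hlin ξs hΔmem η hηΔ]
    have : ∑ k, η k * F ξs (Pi.single k 1)
        = (∑ k, ξs k * F ξs (Pi.single k 1))
          + c * ((∑ k, (if k = j then (1:ℝ) else 0) * F ξs (Pi.single k 1))
            - ∑ k, (if k = i then (1:ℝ) else 0) * F ξs (Pi.single k 1)) := by
      simp only [hη, hsingle]
      rw [mul_sub, Finset.mul_sum, Finset.mul_sum, ← Finset.sum_sub_distrib,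
        ← Finset.sum_add_distrib]
      exact Finset.sum_congr rfl fun k _ => by ring
    rw [this, hsum0]
    simp [ite_mul, Finset.sum_ite_eq']
  rw [hexp] at hFη
  nlinarith

/-- If ξ* minimizes the convex, linearly differentiable criterion Φ over the
set Ξ of bounded approximate designs, and i, j are two indices with ν_i < w_i < μ_i and
ν_j < w_j < μ_j, then F_Φ(ξ*; i) = F_Φ(ξ*; j). -/
theorem stmt_0
    (N : ℕ) (hN : 1 ≤ N)
    (Δ : Set (Fin N → ℝ))
    (hΔ : Δ = {w : Fin N → ℝ | (∀ i, 0 ≤ w i) ∧ ∑ i, w i = 1})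
    (Φ : (Fin N → ℝ) → ℝ)
    (hconv : ConvexOn ℝ Δ Φ)
    (F : (Fin N → ℝ) → (Fin N → ℝ) → ℝ)
    (hF : ∀ ξ ∈ Δ, ∀ η ∈ Δ,
      Filter.Tendsto (fun α : ℝ => (Φ ((1 - α) • ξ + α • η) - Φ ξ) / α)
        (nhdsWithin 0 (Set.Ioi 0)) (nhds (F ξ η)))
    (hlin : ∀ ξ ∈ Δ, ∀ η ∈ Δ, F ξ η = ∑ i, η i * F ξ (Pi.single i 1))
    (ν μ : Fin N → ℝ)
    (hν0 : ∀ i, 0 ≤ ν i) (hνμ : ∀ i, ν i < μ i) (hμ1 : ∀ i, μ i ≤ 1)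
    (hνsum : ∑ i, ν i ≤ 1) (hμsum : 1 ≤ ∑ i, μ i)
    (Ξ : Set (Fin N → ℝ))
    (hΞ : Ξ = {w : Fin N → ℝ | w ∈ Δ ∧ ∀ i, ν i ≤ w i ∧ w i ≤ μ i})
    (ξs : Fin N → ℝ) (hmem : ξs ∈ Ξ)
    (hopt : ∀ ξ ∈ Ξ, Φ ξs ≤ Φ ξ)
    (i j : Fin N)
    (hi : ν i < ξs i ∧ ξs i < μ i)
    (hj : ν j < ξs j ∧ ξs j < μ j) :
    F ξs (Pi.single i 1) = F ξs (Pi.single j 1) := by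
  rcases eq_or_ne i j with rfl | hij
  · rfl
  exact le_antisymm
    (aux_le N Δ hΔ Φ F hF hlin ν μ hν0 Ξ hΞ ξs hmem hopt i j hij hi.1 hj.2)
    (aux_le N Δ hΔ Φ F hF hlin ν μ hν0 Ξ hΞ ξs hmem hopt j i (Ne.symm hij) hj.1 hi.2)
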